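/- If ⟨z^−, e⟩ ≥ ‖w‖, then the projection of (z,w) onto the extended second order cone L equals (z^+, 0). -/

import Mathlib

open Finset

lemma norm_sq_eucl {n : ℕ} (v : EuclideanSpace ℝ (Fin n)) :
    ‖v‖ ^ 2 = ∑ i, (v i) ^ 2 := by
  rw [EuclideanSpace.norm_eq, Real.sq_sqrt (by positivity)]
  simp [Real.norm_eq_abs, sq_abs]

set_option maxHeartbeats 1600000 in
theorem proj_L_case2
    (p q : ℕ) (hp : 0 < p) (hq : 0 < q)
    (L : Set (EuclideanSpace ℝ (Fin p) × EuclideanSpace ℝ (Fin q)))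
    (hL : L = {xu | ∀ i : Fin p, ‖xu.2‖ ≤ xu.1 i})
    (z : EuclideanSpace ℝ (Fin p)) (w : EuclideanSpace ℝ (Fin q))
    (h : ‖w‖ ≤ ∑ i : Fin p, max (-z i) 0) :
    (((WithLp.equiv 2 _).symm (fun i => max (z i) 0), (0 : EuclideanSpace ℝ (Fin q))) ∈ L ∧
      (∀ a ∈ L, ‖z - (WithLp.equiv 2 _).symm (fun i => max (z i) 0)‖ ^ 2 + ‖w - 0‖ ^ 2
          ≤ ‖z - a.1‖ ^ 2 + ‖w - a.2‖ ^ 2)) ∧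
      ∀ b ∈ L, (∀ a ∈ L, ‖z - b.1‖ ^ 2 + ‖w - b.2‖ ^ 2 ≤ ‖z - a.1‖ ^ 2 + ‖w - a.2‖ ^ 2) →
        b = ((WithLp.equiv 2 _).symm (fun i => max (z i) 0), (0 : EuclideanSpace ℝ (Fin q))) := by
  set v1 : EuclideanSpace ℝ (Fin p) := (WithLp.equiv 2 _).symm (fun i => max (z i) 0) with hv1
  have hv1i : ∀ i, v1 i = max (z i) 0 := fun i => rfl
  have hmem : (v1, (0 : EuclideanSpace ℝ (Fin q))) ∈ L := by
    rw [hL]; intro i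
    simp only [hv1i, norm_zero]
    exact le_max_right _ _
  have hzv1 : ‖z - v1‖ ^ 2 = ∑ i, (max (-z i) 0) ^ 2 := by
    rw [norm_sq_eucl]
    refine Finset.sum_congr rfl fun i _ => ?_
    have : (z - v1) i = z i - max (z i) 0 := by simp [hv1i]
    rw [this]
    rcases le_total 0 (z i) with hzi | hzi
    · rw [max_eq_left hzi, max_eq_right (by linarith)]; ring
    · rw [max_eq_right hzi, max_eq_left (by linarith)]; ring
  have hmin : ∀ a ∈ L, ‖z - v1‖ ^ 2 + ‖w - 0‖ ^ 2 ≤ ‖z - a.1‖ ^ 2 + ‖w - a.2‖ ^ 2 := by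
    intro a ha
    rw [hL] at ha
    set t := ‖a.2‖ with ht
    have ht0 : (0:ℝ) ≤ t := norm_nonneg _
    have key : ∀ i : Fin p,
        (max (-z i) 0) * (2 * t) + (max (-z i) 0) ^ 2 ≤ (z i - a.1 i) ^ 2 := by
      intro i
      have hx : t ≤ a.1 i := ha i
      rcases le_total 0 (z i) with hzi | hzi
      · rw [max_eq_right (by linarith)]
        nlinarith [sq_nonneg (z i - a.1 i)]
      · rw [max_eq_left (by linarith)]
        nlinarith [mul_nonneg (neg_nonneg.2 hzi) (sub_nonneg.2 hx), sq_nonneg (a.1 i)]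
    have hsum : (∑ i, max (-z i) 0) * (2 * t) + ∑ i, (max (-z i) 0) ^ 2
        ≤ ∑ i, (z i - a.1 i) ^ 2 := by
      rw [Finset.sum_mul, ← Finset.sum_add_distrib]
      exact Finset.sum_le_sum fun i _ => key i
    have hza : ‖z - a.1‖ ^ 2 = ∑ i, (z i - a.1 i) ^ 2 := by
      rw [norm_sq_eucl]
      exact Finset.sum_congr rfl fun i _ => by simp
    have hw : (‖w‖ - t) ^ 2 ≤ ‖w - a.2‖ ^ 2 := by
      have h1 := abs_norm_sub_norm_le w a.2
      have h2 := pow_le_pow_left₀ (abs_nonneg _) h1 2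
      rwa [sq_abs] at h2
    rw [hzv1, sub_zero, hza]
    nlinarith [mul_nonneg ht0 (sub_nonneg.2 h)]
  refine ⟨⟨hmem, hmin⟩, ?_⟩
  intro b hb hbmin
  have hfb : ‖z - b.1‖ ^ 2 + ‖w - b.2‖ ^ 2 ≤ ‖z - v1‖ ^ 2 + ‖w - 0‖ ^ 2 := by
    simpa using hbmin (v1, (0 : EuclideanSpace ℝ (Fin q))) hmem
  have hfv : ‖z - v1‖ ^ 2 + ‖w - 0‖ ^ 2 ≤ ‖z - b.1‖ ^ 2 + ‖w - b.2‖ ^ 2 := hmin b hb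
  -- midpoint
  set m : EuclideanSpace ℝ (Fin p) × EuclideanSpace ℝ (Fin q) :=
    ((2⁻¹:ℝ) • (b.1 + v1), (2⁻¹:ℝ) • (b.2 + 0)) with hm
  have hbL : ∀ i, ‖b.2‖ ≤ b.1 i := by rw [hL] at hb; exact hb
  have hmL : m ∈ L := by
    rw [hL]
    intro i
    have h1 : m.2 = (2⁻¹:ℝ) • (b.2 + 0) := rfl
    have h2 : m.1 i = (2⁻¹:ℝ) * (b.1 i + v1 i) := by simp [hm, mul_add]
    rw [h1, h2, add_zero, norm_smul]
    have h3 : (0:ℝ) ≤ v1 i := by rw [hv1i]; exact le_max_right _ _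
    have := hbL i
    simp only [Real.norm_eq_abs]
    rw [abs_of_pos (by norm_num : (0:ℝ) < 2⁻¹)]
    nlinarith
  have hfm1 : ‖z - b.1‖ ^ 2 + ‖w - b.2‖ ^ 2 ≤ ‖z - m.1‖ ^ 2 + ‖w - m.2‖ ^ 2 := hbmin m hmL
  have hfm2 : ‖z - v1‖ ^ 2 + ‖w - 0‖ ^ 2 ≤ ‖z - m.1‖ ^ 2 + ‖w - m.2‖ ^ 2 := hmin m hmL
  -- parallelogram law on each component
  have hp1 : 4 * ‖z - m.1‖ ^ 2 + ‖v1 - b.1‖ ^ 2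
      = 2 * ‖z - b.1‖ ^ 2 + 2 * ‖z - v1‖ ^ 2 := by
    have hpl := parallelogram_law_with_norm ℝ (z - b.1) (z - v1)
    have hsum : (z - b.1) + (z - v1) = (2:ℝ) • (z - m.1) := by
      have : m.1 = (2⁻¹:ℝ) • (b.1 + v1) := rfl
      rw [this]; module
    have hdiff : (z - b.1) - (z - v1) = v1 - b.1 := by abel
    rw [hsum, hdiff, norm_smul] at hpl
    simp only [Real.norm_eq_abs] at hpl
    rw [abs_of_pos (by norm_num : (0:ℝ) < 2)] at hpl
    have hm1 : m.1 = (2⁻¹:ℝ) • (b.1 + v1) := rfl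
    rw [hm1] at hpl ⊢
    nlinarith [hpl]
  have hp2 : 4 * ‖w - m.2‖ ^ 2 + ‖(0:EuclideanSpace ℝ (Fin q)) - b.2‖ ^ 2
      = 2 * ‖w - b.2‖ ^ 2 + 2 * ‖w - 0‖ ^ 2 := by
    have hpl := parallelogram_law_with_norm ℝ (w - b.2) (w - (0:EuclideanSpace ℝ (Fin q)))
    have hsum : (w - b.2) + (w - 0) = (2:ℝ) • (w - m.2) := by
      have : m.2 = (2⁻¹:ℝ) • (b.2 + 0) := rfl
      rw [this]; module
    have hdiff : (w - b.2) - (w - (0:EuclideanSpace ℝ (Fin q))) = 0 - b.2 := by abel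
    rw [hsum, hdiff, norm_smul] at hpl
    simp only [Real.norm_eq_abs] at hpl
    rw [abs_of_pos (by norm_num : (0:ℝ) < 2)] at hpl
    have hm2 : m.2 = (2⁻¹:ℝ) • (b.2 + 0) := rfl
    rw [hm2] at hpl ⊢
    nlinarith [hpl]
  have hzero : ‖v1 - b.1‖ ^ 2 + ‖(0:EuclideanSpace ℝ (Fin q)) - b.2‖ ^ 2 ≤ 0 := by
    nlinarith
  have h1 : v1 - b.1 = 0 := by
    have := sq_nonneg ‖v1 - b.1‖
    have := sq_nonneg ‖(0:EuclideanSpace ℝ (Fin q)) - b.2‖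
    have hn : ‖v1 - b.1‖ = 0 := by nlinarith
    exact norm_eq_zero.mp hn
  have h2 : (0:EuclideanSpace ℝ (Fin q)) - b.2 = 0 := by
    have := sq_nonneg ‖v1 - b.1‖
    have := sq_nonneg ‖(0:EuclideanSpace ℝ (Fin q)) - b.2‖
    have hn : ‖(0:EuclideanSpace ℝ (Fin q)) - b.2‖ = 0 := by nlinarith
    exact norm_eq_zero.mp hn
  have hb1 : b.1 = v1 := (sub_eq_zero.mp h1).symm
  have hb2 : b.2 = 0 := by
    have := sub_eq_zero.mp h2; exact this.symm
  exact Prod.ext hb1 hb2
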